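/- Let n_C ≥ n_E be positive natural numbers, K_C an invertible n_C×n_C real matrix, K_E an invertible n_E×n_E real matrix, ρ ∈ ℝ, P the n_E×n_C matrix [I_{n_E} 0], and vectors a ∈ ℝ^{n_C}, b ∈ ℝ^{n_E}. Set M = [[K_C, ρ K_C Pᵀ], [ρ P K_C, ρ² P K_C Pᵀ + K_E]] and k̃ = (ρa, ρ²Pa + b). Then k̃ᵀ M⁻¹ k̃ = ρ² · aᵀ K_C⁻¹ a + bᵀ K_E⁻¹ b; that is, the joint multi-fidelity predictive variance reduction term decomposes into the coarse-level and discrepancy-level reduction terms in the nested-design case. -/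
import Mathlib


open Matrix

theorem mufi_predictive_variance_nested_designs
    (nC nE : ℕ) (hnC : 0 < nC) (hnE : 0 < nE) (h : nE ≤ nC)
    (K_C : Matrix (Fin nC) (Fin nC) ℝ) (K_E : Matrix (Fin nE) (Fin nE) ℝ)
    (hC : IsUnit K_C.det) (hE : IsUnit K_E.det)
    (ρ : ℝ)
    (P : Matrix (Fin nE) (Fin nC) ℝ)
    (hP : ∀ i j, P i j = if Fin.castLE h i = j then 1 else 0)
    (a : Fin nC → ℝ) (b : Fin nE → ℝ) :
    let M : Matrix (Fin nC ⊕ Fin nE) (Fin nC ⊕ Fin nE) ℝ :=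
      Matrix.fromBlocks K_C (ρ • (K_C * Pᵀ)) (ρ • (P * K_C))
        (ρ ^ 2 • (P * K_C * Pᵀ) + K_E)
    let k : Fin nC ⊕ Fin nE → ℝ := Sum.elim (ρ • a) (ρ ^ 2 • (P *ᵥ a) + b)
    k ⬝ᵥ (M⁻¹ *ᵥ k) =
      ρ ^ 2 * (a ⬝ᵥ (K_C⁻¹ *ᵥ a)) + b ⬝ᵥ (K_E⁻¹ *ᵥ b) := by
  intro M k
  set L : Matrix (Fin nC ⊕ Fin nE) (Fin nC ⊕ Fin nE) ℝ :=
    fromBlocks 1 0 (ρ • P) 1 with hLdef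
  set D : Matrix (Fin nC ⊕ Fin nE) (Fin nC ⊕ Fin nE) ℝ :=
    fromBlocks K_C 0 0 K_E with hDdef
  set v : Fin nC ⊕ Fin nE → ℝ := Sum.elim (ρ • a) b with hvdef
  have hLdet : IsUnit L.det := by
    rw [hLdef, det_fromBlocks_zero₁₂]; simp
  have hDdet : IsUnit D.det := by
    rw [hDdef, det_fromBlocks_zero₂₁]; exact hC.mul hE
  have hM : M = L * D * Lᵀ := by
    simp only [hLdef, hDdef, M, fromBlocks_transpose, fromBlocks_multiply,
      transpose_smul, transpose_one, transpose_zero, Matrix.mul_one,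
      Matrix.one_mul, Matrix.mul_zero, Matrix.zero_mul, Matrix.smul_mul,
      Matrix.mul_smul, add_zero, zero_add, smul_smul, pow_two]
  have hk : k = L *ᵥ v := by
    funext i
    simp [hLdef, hvdef, k, fromBlocks_mulVec, one_mulVec, zero_mulVec,
      add_zero, zero_add, smul_mulVec, mulVec_smul, smul_smul, pow_two]
  have hLv : L⁻¹ *ᵥ k = v := by
    rw [hk, mulVec_mulVec, nonsing_inv_mul L hLdet, one_mulVec]
  have hDinv : D⁻¹ = fromBlocks K_C⁻¹ 0 0 K_E⁻¹ := by
    apply inv_eq_right_inv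
    rw [hDdef, fromBlocks_multiply]
    simp [mul_nonsing_inv K_C hC, mul_nonsing_inv K_E hE, fromBlocks_one]
  have hMinv : M⁻¹ = (L⁻¹)ᵀ * (D⁻¹ * L⁻¹) := by
    rw [hM, Matrix.mul_inv_rev, Matrix.mul_inv_rev, ← transpose_nonsing_inv]
  rw [hMinv, ← mulVec_mulVec, dotProduct_mulVec, vecMul_transpose, hLv,
    ← mulVec_mulVec, hLv]
  rw [hDinv, hvdef]
  simp [fromBlocks_mulVec, dotProduct_smul, smul_mulVec, mulVec_smul,
    smul_dotProduct, smul_smul, pow_two, smul_eq_mul, mul_assoc]
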